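/- Let S ⊆ Y be a closed set, Υ: X → Y twice continuously differentiable, and x̄ ∈ Υ⁻¹(S). Assume: (i) for every d, d ∈ T_{Υ⁻¹(S)}(x̄) iff Υ'(x̄)d ∈ T_S(Υ(x̄)); (ii) for d ∈ T_{Υ⁻¹(S)}(x̄), w ∈ T²_{Υ⁻¹(S)}(x̄, d) iff Υ'(x̄)w + ∇²Υ(x̄)(d,d) ∈ T²_S(Υ(x̄), Υ'(x̄)d); (iii) there is κ > 0 such that the solution set map S_d(p) := {u | Υ'(x̄)u + ∇²Υ(x̄)(d,d) + p ∈ T²_S(Υ(x̄), Υ'(x̄)d)} satisfies S_d(p) ⊆ S_d(0) + κ‖p‖𝔹. If S is outer second-order regular at Υ(x̄) in the direction Υ'(x̄)d ∈ T_S(Υ(x̄)), then Υ⁻¹(S) is outer second-order regular at x̄ in the direction d. -/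

import Mathlib

open Filter Topology

lemma taylor2_aux {X Y : Type*} [NormedAddCommGroup X] [NormedSpace ℝ X]
    [NormedAddCommGroup Y] [NormedSpace ℝ Y]
    (f : X → Y) (hf : ContDiff ℝ 2 f) (x : X) {ε : ℝ} (hε : 0 < ε) :
    ∃ δ > 0, ∀ h : X, ‖h‖ ≤ δ →
      ‖f (x + h) - f x - fderiv ℝ f x h - (1/2 : ℝ) • (fderiv ℝ (fderiv ℝ f) x h h)‖
        ≤ ε * ‖h‖ ^ 2 := by
  set A := fderiv ℝ f x
  set B := fderiv ℝ (fderiv ℝ f) x with hBdef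
  have hdiff : Differentiable ℝ f := hf.differentiable (by norm_num)
  have hdiff' : Differentiable ℝ (fderiv ℝ f) :=
    (hf.fderiv_right (m := 1) (by norm_num)).differentiable (by norm_num)
  have hB : HasFDerivAt (fderiv ℝ f) B x := (hdiff' x).hasFDerivAt
  have hsymm : ∀ u v : X, B u v = B v u := fun u v =>
    ((hf.contDiffAt (x := x)).isSymmSndFDerivAt (by norm_num)).eq u v
  -- little-o bound for fderiv near x
  have hlo := hB.isLittleO
  rw [Asymptotics.isLittleO_iff] at hlo
  have hev := hlo (c := ε) hε
  rw [Metric.eventually_nhds_iff] at hev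
  obtain ⟨δ, hδ, hball⟩ := hev
  refine ⟨δ / 2, by positivity, fun h hh => ?_⟩
  -- the auxiliary function g
  set g : X → Y := fun v => f (x + v) - A v - (1/2 : ℝ) • (B v v) with hg
  have hgderiv : ∀ v : X, HasFDerivAt g (fderiv ℝ f (x + v) - A - B v) v := by
    intro v
    have h1 : HasFDerivAt (fun v : X => f (x + v)) (fderiv ℝ f (x + v)) v := by
      have := (hdiff (x + v)).hasFDerivAt.comp v
        ((hasFDerivAt_id v).const_add x)
      simpa [Function.comp_def] using this
    have h2 : HasFDerivAt (fun v : X => A v) A v := A.hasFDerivAt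
    have h3 : HasFDerivAt (fun v : X => B v v)
        ((B v).comp (ContinuousLinearMap.id ℝ X) + B.flip v) v :=
      HasFDerivAt.clm_apply (B.hasFDerivAt) (hasFDerivAt_id v)
    have h4 : HasFDerivAt (fun v : X => (1/2 : ℝ) • (B v v))
        ((1/2 : ℝ) • ((B v).comp (ContinuousLinearMap.id ℝ X) + B.flip v)) v :=
      h3.const_smul _
    have heq : (1/2 : ℝ) • ((B v).comp (ContinuousLinearMap.id ℝ X) + B.flip v) = B v := by
      ext u
      simp only [ContinuousLinearMap.smul_apply, ContinuousLinearMap.add_apply,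
        ContinuousLinearMap.coe_comp', Function.comp_apply, ContinuousLinearMap.coe_id',
        id_eq, ContinuousLinearMap.flip_apply]
      rw [hsymm u v]
      module
    rw [heq] at h4
    exact (h1.sub h2).sub h4
  have hbound : ∀ v ∈ segment ℝ (0 : X) h,
      ‖fderiv ℝ f (x + v) - A - B v‖ ≤ ε * ‖h‖ := by
    intro v hv
    obtain ⟨a, b, ha, hb, hab, rfl⟩ := hv
    have hnv : ‖a • (0 : X) + b • h‖ ≤ ‖h‖ := by
      simp only [smul_zero, zero_add, norm_smul, Real.norm_eq_abs, abs_of_nonneg hb]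
      nlinarith [norm_nonneg h]
    have hvlt : dist (x + (a • (0:X) + b • h)) x < δ := by
      rw [dist_eq_norm]
      simp only [add_sub_cancel_left]
      calc ‖a • (0:X) + b • h‖ ≤ ‖h‖ := hnv
        _ ≤ δ / 2 := hh
        _ < δ := by linarith
    have := hball hvlt
    simp only [add_sub_cancel_left] at this
    calc ‖fderiv ℝ f (x + (a • (0:X) + b • h)) - A - B (a • (0:X) + b • h)‖
        ≤ ε * ‖a • (0:X) + b • h‖ := by
          have : ‖fderiv ℝ f (x + (a • (0:X) + b • h)) - fderiv ℝ f x
              - B (a • (0:X) + b • h)‖ ≤ ε * ‖a • (0:X) + b • h‖ := this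
          simpa [sub_sub] using this
      _ ≤ ε * ‖h‖ := by nlinarith
  have hconv : Convex ℝ (segment ℝ (0 : X) h) := convex_segment _ _
  have key := hconv.norm_image_sub_le_of_norm_hasFDerivWithin_le
    (fun v hv => (hgderiv v).hasFDerivWithinAt) hbound
    (left_mem_segment ℝ 0 h) (right_mem_segment ℝ 0 h)
  have hg0 : g 0 = f x := by simp [hg]
  have hgh : g h = f (x + h) - A h - (1/2 : ℝ) • (B h h) := rfl
  calc ‖f (x + h) - f x - A h - (1/2 : ℝ) • (B h h)‖ = ‖g h - g 0‖ := by
        rw [hg0, hgh]; congr 1; abel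
      _ ≤ ε * ‖h‖ * ‖h - 0‖ := key
      _ = ε * ‖h‖ ^ 2 := by rw [sub_zero]; ring


/-- The (Bouligand) tangent cone to `S` at `x`, via sequences. -/
def tangentConeB {E : Type*} [NormedAddCommGroup E] [NormedSpace ℝ E]
    (S : Set E) (x : E) : Set E :=
  {d | ∃ (t : ℕ → ℝ) (dk : ℕ → E), (∀ k, 0 < t k) ∧ Tendsto t atTop (𝓝 0) ∧
    Tendsto dk atTop (𝓝 d) ∧ ∀ k, x + t k • dk k ∈ S}

/-- The outer second-order tangent set to `S` at `x` in direction `h`. -/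
def outerSecondOrderTangentSet {E : Type*} [NormedAddCommGroup E] [NormedSpace ℝ E]
    (S : Set E) (x h : E) : Set E :=
  {w | ∃ t : ℕ → ℝ, (∀ k, 0 < t k) ∧ Tendsto t atTop (𝓝 0) ∧
    Tendsto (fun k => Metric.infDist (x + t k • h + ((t k) ^ 2 / 2) • w) S / (t k) ^ 2)
      atTop (𝓝 0)}

/-- `S` is outer second-order regular at `y ∈ S` in direction `h`: for every sequence
`y + t_k h + ½ t_k² w_k ∈ S` with `t_k ↓ 0` and `t_k w_k → 0`, one has
`dist(w_k, T²_S(y; h)) → 0`. -/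
def OuterSecondOrderRegular {E : Type*} [NormedAddCommGroup E] [NormedSpace ℝ E]
    (S : Set E) (y h : E) : Prop :=
  ∀ (t : ℕ → ℝ) (w : ℕ → E), (∀ k, 0 < t k) → Tendsto t atTop (𝓝 0) →
    Tendsto (fun k => t k • w k) atTop (𝓝 0) →
    (∀ k, y + t k • h + ((t k) ^ 2 / 2) • w k ∈ S) →
    Tendsto (fun k => Metric.infDist (w k) (outerSecondOrderTangentSet S y h)) atTop (𝓝 0)

set_option maxHeartbeats 1600000 in
/-- Under the first- and second-order tangent characterizations of the preimage and the
Lipschitz-type stability of the second-order linearized system, outer second-order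
regularity of `S` at `Υ(x̄)` in direction `Υ'(x̄)d` implies outer second-order regularity
of `Υ⁻¹(S)` at `x̄` in direction `d`. -/
theorem outerSecondOrderRegular_preimage
    {X Y : Type*} [NormedAddCommGroup X] [InnerProductSpace ℝ X] [FiniteDimensional ℝ X]
    [NormedAddCommGroup Y] [InnerProductSpace ℝ Y] [FiniteDimensional ℝ Y]
    (S : Set Y) (hS : IsClosed S) (Υ : X → Y) (hΥ : ContDiff ℝ 2 Υ)
    (x : X) (hx : Υ x ∈ S) (d : X)
    -- (i): tangent cone characterization
    (hi : ∀ v : X, v ∈ tangentConeB (Υ ⁻¹' S) x ↔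
      fderiv ℝ Υ x v ∈ tangentConeB S (Υ x))
    -- (ii): second-order tangent set characterization
    (hii : ∀ v ∈ tangentConeB (Υ ⁻¹' S) x, ∀ w : X,
      w ∈ outerSecondOrderTangentSet (Υ ⁻¹' S) x v ↔
      fderiv ℝ Υ x w + fderiv ℝ (fderiv ℝ Υ) x v v ∈
        outerSecondOrderTangentSet S (Υ x) (fderiv ℝ Υ x v))
    -- (iii): Lipschitz-type stability of the linearized second-order system
    (hiii : ∃ κ > (0 : ℝ), ∀ p : Y,
      ∀ u ∈ {u : X | fderiv ℝ Υ x u + fderiv ℝ (fderiv ℝ Υ) x d d + p ∈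
        outerSecondOrderTangentSet S (Υ x) (fderiv ℝ Υ x d)},
      ∃ u' ∈ {u : X | fderiv ℝ Υ x u + fderiv ℝ (fderiv ℝ Υ) x d d ∈
        outerSecondOrderTangentSet S (Υ x) (fderiv ℝ Υ x d)},
      ‖u - u'‖ ≤ κ * ‖p‖)
    (hd : fderiv ℝ Υ x d ∈ tangentConeB S (Υ x))
    (hreg : OuterSecondOrderRegular S (Υ x) (fderiv ℝ Υ x d)) :
    OuterSecondOrderRegular (Υ ⁻¹' S) x d := by

  obtain ⟨κ, hκ, hstab⟩ := hiii
  intro t w ht htend hw hmem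
  set A : X →L[ℝ] Y := fderiv ℝ Υ x with hA
  set B : X →L[ℝ] X →L[ℝ] Y := fderiv ℝ (fderiv ℝ Υ) x with hB
  have htne : ∀ k, t k ≠ 0 := fun k => (ht k).ne'
  set h' : ℕ → X := fun k => t k • d + (t k ^ 2 / 2) • w k with hh'
  have hmem' : ∀ k, Υ (x + h' k) ∈ S := by
    intro k
    have := hmem k
    rw [add_assoc] at this
    exact this
  set W : ℕ → Y := fun k => (2 / t k ^ 2) • (Υ (x + h' k) - Υ x - t k • (A d)) with hWdef
  set V : ℕ → Y := fun k => A (w k) + B d d with hV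
  set R : ℕ → Y := fun k =>
    Υ (x + h' k) - Υ x - A (h' k) - (1/2 : ℝ) • (B (h' k) (h' k)) with hR
  -- h' tends to 0
  have hh'0 : Tendsto h' atTop (𝓝 0) := by
    have h1 : Tendsto (fun k => t k • d) atTop (𝓝 0) := by
      simpa using htend.smul_const d
    have h2 : Tendsto (fun k => (t k ^ 2 / 2) • w k) atTop (𝓝 0) := by
      have h2' := (htend.div_const 2).smul hw
      simp only [zero_div, zero_smul] at h2'
      apply h2'.congr
      intro k
      rw [smul_smul]
      congr 1
      ring
    simpa using h1.add h2
  -- decomposition of W - V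
  have hdecomp : ∀ k, W k - V k = (2 / t k ^ 2) • R k
      + (1/2 : ℝ) • (B d (t k • w k)) + (1/2 : ℝ) • (B (t k • w k) d)
      + (1/4 : ℝ) • (B (t k • w k) (t k • w k)) := by
    intro k
    have h0 : t k ≠ 0 := htne k
    simp only [hWdef, hV, hR, hh', map_add, map_smul, ContinuousLinearMap.add_apply,
      ContinuousLinearMap.smul_apply, smul_add, smul_smul]
    match_scalars <;> field_simp <;> ring
  -- W - V tends to 0
  have hWV : Tendsto (fun k => W k - V k) atTop (𝓝 0) := by
    have hterm1 : Tendsto (fun k => (2 / t k ^ 2) • R k) atTop (𝓝 0) := by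
      rw [NormedAddCommGroup.tendsto_nhds_zero]
      intro ε hε
      have hM : (0:ℝ) < ‖d‖ + 1 := by positivity
      obtain ⟨δ, hδ, htay⟩ := taylor2_aux Υ hΥ x
        (ε := ε / (2 * (‖d‖ + 1) ^ 2 + 1)) (by positivity)
      have hev1 : ∀ᶠ k in atTop, ‖t k • w k‖ ≤ 1 := by
        have := hw.norm
        rw [show ‖(0:X)‖ = 0 by simp] at this
        filter_upwards [this.eventually_le_const (by norm_num : (0:ℝ) < 1)] with k hk
          using hk
      have hev2 : ∀ᶠ k in atTop, ‖h' k‖ ≤ δ := by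
        have := hh'0.norm
        rw [show ‖(0:X)‖ = 0 by simp] at this
        filter_upwards [this.eventually_le_const hδ] with k hk using hk
      filter_upwards [hev1, hev2] with k hk1 hk2
      have h0 : t k ≠ 0 := htne k
      have hhb : ‖h' k‖ ≤ t k * (‖d‖ + 1) := by
        have : ‖h' k‖ ≤ ‖t k • d‖ + ‖(t k ^ 2 / 2) • w k‖ := norm_add_le _ _
        have e1 : ‖t k • d‖ = t k * ‖d‖ := by
          rw [norm_smul, Real.norm_eq_abs, abs_of_pos (ht k)]
        have e2 : ‖(t k ^ 2 / 2) • w k‖ = (t k / 2) * ‖t k • w k‖ := by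
          rw [norm_smul, norm_smul, Real.norm_eq_abs, Real.norm_eq_abs,
            abs_of_pos (ht k), abs_of_pos (by positivity : (0:ℝ) < t k ^ 2 / 2)]
          ring
        have : ‖h' k‖ ≤ t k * ‖d‖ + (t k / 2) * ‖t k • w k‖ := by
          rw [← e1, ← e2]; exact this
        nlinarith [ht k, norm_nonneg (t k • w k)]
      have hRb := htay (h' k) hk2
      have hRb' : ‖R k‖ ≤ ε / (2 * (‖d‖ + 1) ^ 2 + 1) * ‖h' k‖ ^ 2 := hRb
      have hnorm : ‖(2 / t k ^ 2) • R k‖ = (2 / t k ^ 2) * ‖R k‖ := by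
        rw [norm_smul, Real.norm_eq_abs, abs_of_pos (by positivity : (0:ℝ) < 2 / t k ^ 2)]
      rw [hnorm]
      have hh2 : ‖h' k‖ ^ 2 ≤ (t k * (‖d‖ + 1)) ^ 2 := by
        have := norm_nonneg (h' k)
        nlinarith
      have ht2 : (0:ℝ) < t k ^ 2 := by positivity
      calc (2 / t k ^ 2) * ‖R k‖
          ≤ (2 / t k ^ 2) * (ε / (2 * (‖d‖ + 1) ^ 2 + 1) * (t k * (‖d‖ + 1)) ^ 2) := by
            apply mul_le_mul_of_nonneg_left _ (by positivity)
            calc ‖R k‖ ≤ ε / (2 * (‖d‖ + 1) ^ 2 + 1) * ‖h' k‖ ^ 2 := hRb'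
              _ ≤ ε / (2 * (‖d‖ + 1) ^ 2 + 1) * (t k * (‖d‖ + 1)) ^ 2 := by
                  apply mul_le_mul_of_nonneg_left hh2 (by positivity)
        _ = ε * (2 * (‖d‖ + 1) ^ 2) / (2 * (‖d‖ + 1) ^ 2 + 1) := by
            field_simp
        _ < ε := by
            rw [div_lt_iff₀ (by positivity)]
            nlinarith
    have hterm2 : Tendsto (fun k => (1/2 : ℝ) • (B d (t k • w k))) atTop (𝓝 0) := by
      have : Tendsto (fun k => B d (t k • w k)) atTop (𝓝 (B d 0)) :=
        ((B d).continuous.tendsto 0).comp hw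
      simpa using this.const_smul (1/2 : ℝ)
    have hterm3 : Tendsto (fun k => (1/2 : ℝ) • (B (t k • w k) d)) atTop (𝓝 0) := by
      have : Tendsto (fun k => (B.flip d) (t k • w k)) atTop (𝓝 ((B.flip d) 0)) :=
        ((B.flip d).continuous.tendsto 0).comp hw
      simp only [ContinuousLinearMap.flip_apply] at this
      simpa using this.const_smul (1/2 : ℝ)
    have hterm4 : Tendsto (fun k => (1/4 : ℝ) • (B (t k • w k) (t k • w k))) atTop (𝓝 0) := by
      have hcont : Continuous (fun p : X × X => B p.1 p.2) :=
        B.isBoundedBilinearMap.continuous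
      have : Tendsto (fun k => B (t k • w k) (t k • w k)) atTop (𝓝 (B 0 0)) :=
        (hcont.tendsto (0, 0)).comp (hw.prodMk_nhds hw)
      simpa using this.const_smul (1/4 : ℝ)
    have := ((hterm1.add hterm2).add hterm3).add hterm4
    simp only [add_zero] at this
    apply this.congr
    intro k
    rw [hdecomp k]
  -- t • W tends to 0
  have hWt : Tendsto (fun k => t k • W k) atTop (𝓝 0) := by
    have e : ∀ k, t k • W k = t k • (W k - V k) + (A (t k • w k) + t k • (B d d)) := by
      intro k
      simp only [hV, smul_sub, smul_add, map_smul]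
      abel
    have h1 : Tendsto (fun k => t k • (W k - V k)) atTop (𝓝 0) := by
      have := htend.smul hWV
      simpa using this
    have h2 : Tendsto (fun k => A (t k • w k)) atTop (𝓝 0) := by
      have := (A.continuous.tendsto 0).comp hw
      rw [map_zero] at this
      exact this
    have h3 : Tendsto (fun k => t k • (B d d)) atTop (𝓝 0) := by
      simpa using htend.smul_const (B d d)
    have := (h1.add (h2.add h3))
    simp only [add_zero] at this
    exact this.congr fun k => (e k).symm
  -- membership for the image sequence
  have hmemS : ∀ k, Υ x + t k • (A d) + (t k ^ 2 / 2) • W k ∈ S := by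
    intro k
    have h0 : t k ≠ 0 := htne k
    have e : (t k ^ 2 / 2) • W k = Υ (x + h' k) - Υ x - t k • (A d) := by
      rw [hWdef]
      rw [smul_smul]
      rw [show t k ^ 2 / 2 * (2 / t k ^ 2) = 1 by field_simp]
      rw [one_smul]
    rw [e]
    have : Υ x + t k • A d + (Υ (x + h' k) - Υ x - t k • A d) = Υ (x + h' k) := by abel
    rw [this]
    exact hmem' k
  have hdistS := hreg t W ht htend hWt hmemS
  rcases Set.eq_empty_or_nonempty (outerSecondOrderTangentSet (Υ ⁻¹' S) x d) with hE | hNE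
  · simp only [hE, Metric.infDist_empty]
    exact tendsto_const_nhds
  obtain ⟨w₀, hw₀⟩ := hNE
  have hd' : d ∈ tangentConeB (Υ ⁻¹' S) x := (hi d).mpr hd
  have hTne : (outerSecondOrderTangentSet S (Υ x) (A d)).Nonempty :=
    ⟨A w₀ + B d d, (hii d hd' w₀).mp hw₀⟩
  have hz : ∀ k : ℕ, ∃ z ∈ outerSecondOrderTangentSet S (Υ x) (A d),
      dist (W k) z < Metric.infDist (W k) (outerSecondOrderTangentSet S (Υ x) (A d))
        + 1 / ((k : ℝ) + 1) := by
    intro k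
    apply (Metric.infDist_lt_iff hTne).mp
    have : (0:ℝ) < 1 / ((k : ℝ) + 1) := by positivity
    linarith
  choose z hzmem hzd using hz
  set p : ℕ → Y := fun k => z k - (A (w k) + B d d) with hp
  have hpu : ∀ k, w k ∈ {u : X | A u + B d d + p k ∈
      outerSecondOrderTangentSet S (Υ x) (A d)} := by
    intro k
    simp only [Set.mem_setOf_eq]
    have e : A (w k) + B d d + p k = z k := by rw [hp]; module
    rw [e]
    exact hzmem k
  choose u humem hub using fun k => hstab (p k) (w k) (hpu k)
  have humem' : ∀ k, u k ∈ outerSecondOrderTangentSet (Υ ⁻¹' S) x d :=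
    fun k => (hii d hd' (u k)).mpr (humem k)
  have hple : ∀ k, ‖p k‖ ≤ Metric.infDist (W k) (outerSecondOrderTangentSet S (Υ x) (A d))
      + 1 / ((k : ℝ) + 1) + ‖W k - V k‖ := by
    intro k
    have e : p k = (z k - W k) + (W k - V k) := by rw [hp, hV]; module
    have h1 : ‖p k‖ ≤ ‖z k - W k‖ + ‖W k - V k‖ := by rw [e]; exact norm_add_le _ _
    have h2 : ‖z k - W k‖ ≤ Metric.infDist (W k) (outerSecondOrderTangentSet S (Υ x) (A d))
        + 1 / ((k : ℝ) + 1) := by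
      have : ‖z k - W k‖ = dist (W k) (z k) := by rw [dist_comm, dist_eq_norm]
      rw [this]
      exact (hzd k).le
    linarith
  apply squeeze_zero (fun k => Metric.infDist_nonneg)
    (g := fun k => κ * (Metric.infDist (W k) (outerSecondOrderTangentSet S (Υ x) (A d))
      + 1 / ((k : ℝ) + 1) + ‖W k - V k‖))
  · intro k
    calc Metric.infDist (w k) (outerSecondOrderTangentSet (Υ ⁻¹' S) x d)
        ≤ dist (w k) (u k) := Metric.infDist_le_dist_of_mem (humem' k)
      _ = ‖w k - u k‖ := dist_eq_norm _ _
      _ ≤ κ * ‖p k‖ := hub k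
      _ ≤ κ * _ := mul_le_mul_of_nonneg_left (hple k) hκ.le
  · have h2 : Tendsto (fun k : ℕ => 1 / ((k : ℝ) + 1)) atTop (𝓝 0) :=
      tendsto_one_div_add_atTop_nhds_zero_nat
    have h3 : Tendsto (fun k => ‖W k - V k‖) atTop (𝓝 0) := by
      simpa using hWV.norm
    have := ((hdistS.add h2).add h3).const_mul κ
    simpa using this
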